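/- Let T be an observation table and M a transducer compatible with T. Then there exists a transducer M', with at most as many states as M, that is compatible with T and is the transducer resulting from some merging map on T. (Concretely, the transducer resulting from the merging map induced by M is such an M'.) -/

import Mathlib

attribute [local instance] Classical.propDecidable

/-- A subsequential string transducer with input alphabet `σ` and output alphabet `γ`. -/
structure Transducer (σ : Type) (γ : Type) : Type 1 where
  Q : Type
  fin : Finite Q
  q0 : Q
  w0 : List γ
  δ : Q → σ → Option (Q × List γ)
  δF : Q → Option (List γ)

namespace Transducer

variable {σ γ : Type}

/-- The run relation `q →*^{u|w} q'`, as a function: from state `q`, reading `u`,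
we reach the returned state producing the returned (concatenated) output. -/
def runFrom (M : Transducer σ γ) : M.Q → List σ → Option (M.Q × List γ)
  | q, [] => some (q, [])
  | q, a :: u =>
    (M.δ q a).bind fun x =>
      (M.runFrom x.1 u).map fun y => (y.1, x.2 ++ y.2)

/-- The semantics `⟦M⟧` of a transducer, as a partial function `Σ* → Γ*`. -/
def sem (M : Transducer σ γ) (u : List σ) : Option (List γ) :=
  (M.runFrom M.q0 u).bind fun x => (M.δF x.1).map fun w' => M.w0 ++ x.2 ++ w'

/-- The number of states `|M|` of a transducer. -/
noncomputable def size (M : Transducer σ γ) : ℕ := Nat.card M.Q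

/-- The run of `v` in `M` (from the initial state) uses the transition out of
state `q` reading letter `a`. -/
def usesTransition (M : Transducer σ γ) (q : M.Q) (a : σ) (v : List σ) : Prop :=
  ∃ (vp vs : List σ) (w : List γ), v = vp ++ a :: vs ∧ M.runFrom M.q0 vp = some (q, w)

/-- Modify the transition function of `M` at `(q, a)`: replace it by `o`
(`o = none` deletes the transition, `o = some (q', w)` makes it `q →^{a|w} q'`). -/
noncomputable def modifyDelta (M : Transducer σ γ) (q : M.Q) (a : σ)
    (o : Option (M.Q × List γ)) : Transducer σ γ :=
  { M with δ := fun p b => if p = q ∧ b = a then o else M.δ p b }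

/-- The product transducer `M × A` of a transducer and a DFA. -/
noncomputable def prodDFA {Q : Type} [Finite Q] (M : Transducer σ γ) (A : DFA σ Q) :
    Transducer σ γ where
  Q := M.Q × Q
  fin := by have := M.fin; infer_instance
  q0 := (M.q0, A.start)
  w0 := M.w0
  δ := fun qp a => (M.δ qp.1 a).map fun x => ((x.1, A.step qp.2 a), x.2)
  δF := fun qp => if qp.2 ∈ A.accept then M.δF qp.1 else none

end Transducer

/-- A table entry: a word of `Γ*`, the wildcard `#`, or `⊥`. -/
inductive TVal (γ : Type) : Type where
  | word : List γ → TVal γ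
  | hash : TVal γ
  | bot  : TVal γ

/-- An observation table for a target partial function `τ` with regular domain
upper bound `Up`, based on a finite prefix-closed set `P` and a finite
suffix-closed set `S` (both containing `ε`). -/
structure ObsTable (σ γ : Type) where
  P : Finset (List σ)
  S : Finset (List σ)
  eps_mem_P : ([] : List σ) ∈ P
  eps_mem_S : ([] : List σ) ∈ S
  prefixClosed : ∀ u ∈ P, ∀ v : List σ, v <+: u → v ∈ P
  suffixClosed : ∀ u ∈ S, ∀ v : List σ, v <:+ u → v ∈ S
  Up : Language σ
  regular : ∃ (n : ℕ) (A : DFA σ (Fin n)), A.accepts = Up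
  τ : List σ → Option (List γ)
  dom_subset : ∀ u : List σ, (τ u).isSome → u ∈ Up

namespace ObsTable

variable {σ γ : Type}

/-- The set `P ∪ PΣ`. -/
def rowIdx (T : ObsTable σ γ) : Set (List σ) :=
  ↑T.P ∪ {x | ∃ p ∈ T.P, ∃ a : σ, x = p ++ [a]}

/-- The set `(P ∪ PΣ)·S` on which the table is defined. -/
def rows (T : ObsTable σ γ) : Set (List σ) :=
  {x | ∃ u ∈ T.rowIdx, ∃ v ∈ T.S, x = u ++ v}

/-- The table entry at `x`: `#` if `x ∉ Up`, `⊥` if `x ∈ Up ∖ dom τ`, and `τ x` otherwise. -/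
noncomputable def val (T : ObsTable σ γ) (x : List σ) : TVal γ :=
  if x ∈ T.Up then
    match T.τ x with
    | some w => TVal.word w
    | none => TVal.bot
  else TVal.hash

/-- `P_T`: the set of prefixes of elements of `(P ∪ PΣ)·S`. -/
def PT (T : ObsTable σ γ) : Set (List σ) := {u | ∃ x ∈ T.rows, u <+: x}

/-- `P_Γ`: those `u ∈ P_T` having an extension whose table entry is a word of `Γ*`. -/
def PGamma (T : ObsTable σ γ) : Set (List σ) :=
  {u | u ∈ T.PT ∧ ∃ v : List σ, u ++ v ∈ T.rows ∧ ∃ w, T.val (u ++ v) = TVal.word w}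

/-- A transducer `M` is compatible with the table `T`. -/
def Compatible (T : ObsTable σ γ) (M : Transducer σ γ) : Prop :=
  ∀ x ∈ T.rows,
    (∀ w, T.val x = TVal.word w → M.sem x = some w) ∧
    (T.val x = TVal.bot → M.sem x = none)

lemma rowIdx_finite [Finite σ] (T : ObsTable σ γ) : T.rowIdx.Finite := by
  refine Set.Finite.union T.P.finite_toSet ?_
  have h : {x : List σ | ∃ p ∈ T.P, ∃ a : σ, x = p ++ [a]}
      ⊆ (fun pa : List σ × σ => pa.1 ++ [pa.2]) '' ((↑T.P : Set (List σ)) ×ˢ (Set.univ : Set σ)) := by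
    rintro x ⟨p, hp, a, rfl⟩
    exact ⟨(p, a), ⟨hp, trivial⟩, rfl⟩
  exact ((T.P.finite_toSet.prod Set.finite_univ).image _).subset h

lemma rows_finite [Finite σ] (T : ObsTable σ γ) : T.rows.Finite := by
  have h : T.rows ⊆ (fun uv : List σ × List σ => uv.1 ++ uv.2) '' (T.rowIdx ×ˢ (↑T.S : Set (List σ))) := by
    rintro x ⟨u, hu, v, hv, rfl⟩
    exact ⟨(u, v), ⟨hu, hv⟩, rfl⟩
  exact (((rowIdx_finite T).prod T.S.finite_toSet).image _).subset h

lemma PT_finite [Finite σ] (T : ObsTable σ γ) : T.PT.Finite := by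
  have h : T.PT ⊆ ⋃ x ∈ T.rows, {u : List σ | u ∈ x.inits} := by
    rintro u ⟨x, hx, hpre⟩
    exact Set.mem_biUnion hx (by simpa [List.mem_inits] using hpre)
  refine (Set.Finite.biUnion (rows_finite T) fun x _ => ?_).subset h
  exact x.inits.finite_toSet

end ObsTable

/-- A merging map `(≡, f)` on an observation table `T`. -/
structure MergingMap {σ γ : Type} (T : ObsTable σ γ) where
  rel : List σ → List σ → Prop
  f : List σ → Option (List γ)
  rel_mem : ∀ u v : List σ, rel u v → u ∈ T.PT ∧ v ∈ T.PT
  rel_refl : ∀ u ∈ T.PT, rel u u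
  rel_symm : ∀ {u v : List σ}, rel u v → rel v u
  rel_trans : ∀ {u v w : List σ}, rel u v → rel v w → rel u w
  f_mem : ∀ u : List σ, (f u).isSome → u ∈ T.PT
  cond1 : ∀ u v : List σ, f u = none → rel u v → f v = none
  cond2 : ∀ (u v : List σ) (w : List γ), u ∈ T.PT → u ++ v ∈ T.rows →
    T.val (u ++ v) = TVal.word w → ∃ x, f u = some x ∧ x <+: w
  cond3 : ∀ (u : List σ) (a : σ) (w : List γ), f (u ++ [a]) = some w →
    ∃ x, f u = some x ∧ x <+: w
  cond4 : ∀ (u u' : List σ) (a : σ) (wu : List γ), f u = some wu → rel u u' →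
    u ++ [a] ∈ T.PT → u' ++ [a] ∈ T.PT →
    rel (u ++ [a]) (u' ++ [a]) ∧
    ∀ wua, f (u ++ [a]) = some wua →
      ∃ (wu' x : List γ), f u' = some wu' ∧ wua = wu ++ x ∧ f (u' ++ [a]) = some (wu' ++ x)
  cond5 : ∀ (u u' : List σ) (w : List γ), u ∈ T.rows → T.val u = TVal.word w → rel u u' →
    (u' ∈ T.rows → T.val u' ≠ TVal.bot) ∧
    ∀ w', u' ∈ T.rows → T.val u' = TVal.word w' →
      ∃ (x fu fu' : List γ), f u = some fu ∧ f u' = some fu' ∧ w = fu ++ x ∧ w' = fu' ++ x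
  cond6 : ∀ (u : List σ) (a : σ), (f (u ++ [a])).isSome →
    (¬ ∃ v, rel u v ∧ v ++ [a] ∈ T.PGamma) → f (u ++ [a]) = f u

namespace MergingMap

variable {σ γ : Type} {T : ObsTable σ γ}

/-- The `≡`-class of `u`. -/
def cls (m : MergingMap T) (u : List σ) : Set (List σ) := {v | m.rel u v}

/-- The set of `≡`-classes meeting `dom f`. -/
def classes (m : MergingMap T) : Set (Set (List σ)) :=
  {C | ∃ u : List σ, (m.f u).isSome ∧ C = m.cls u}

/-- The size of a merging map: the number of `≡`-classes meeting `dom f`. -/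
noncomputable def size (m : MergingMap T) : ℕ := m.classes.ncard

lemma cls_mem_classes (m : MergingMap T) {u : List σ} (h : (m.f u).isSome) :
    m.cls u ∈ m.classes := ⟨u, h, rfl⟩

lemma classes_finite [Finite σ] (m : MergingMap T) : m.classes.Finite := by
  have h : m.classes ⊆ m.cls '' T.PT := by
    rintro C ⟨u, hu, rfl⟩
    exact ⟨u, m.f_mem u hu, rfl⟩
  exact ((T.PT_finite).image _).subset h

/-- A muted pair `(u, a)` of a merging map. -/
def Muted (m : MergingMap T) (u : List σ) (a : σ) : Prop :=
  (m.f u).isSome ∧ (m.f (u ++ [a])).isSome ∧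
    ¬ ∃ v, m.rel u v ∧ v ++ [a] ∈ T.PGamma

/-- An open end `(u, a)` of a merging map. -/
def OpenEnd (m : MergingMap T) (u : List σ) (a : σ) : Prop :=
  u ∈ T.PT ∧ ¬ ∃ v, m.rel u v ∧ v ++ [a] ∈ T.PT

/-- The transducer resulting from a merging map (assuming `f ε` is defined,
so that the initial state exists). -/
noncomputable def resulting [Finite σ] (m : MergingMap T) (h0 : (m.f []).isSome) :
    Transducer σ γ where
  Q := {C : Set (List σ) // C ∈ m.classes}
  fin := m.classes_finite.to_subtype
  q0 := ⟨m.cls [], m.cls_mem_classes h0⟩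
  w0 := (m.f []).get h0
  δ := fun q a =>
    if h : ∃ u : List σ, (m.f u).isSome ∧ (m.f (u ++ [a])).isSome ∧ q.1 = m.cls u then
      some (⟨m.cls (h.choose ++ [a]), m.cls_mem_classes h.choose_spec.2.1⟩,
        ((m.f (h.choose ++ [a])).get h.choose_spec.2.1).drop
          ((m.f h.choose).get h.choose_spec.1).length)
    else none
  δF := fun q =>
    if h : ∃ u : List σ, (m.f u).isSome ∧ q.1 = m.cls u ∧ u ∈ T.rows ∧
        ∃ w, T.val u = TVal.word w then
      some (h.choose_spec.2.2.2.choose.drop ((m.f h.choose).get h.choose_spec.1).length)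
    else none

/-- The state `q_u` of the resulting transducer associated with `u ∈ dom f`. -/
noncomputable def state [Finite σ] (m : MergingMap T) (h0 : (m.f []).isSome)
    {u : List σ} (h : (m.f u).isSome) : (m.resulting h0).Q :=
  ⟨m.cls u, m.cls_mem_classes h⟩

/-- An open completion of a merging map, determined by a choice `g` of added
transitions (which, when used, must only be added at open ends, with output `ε`). -/
noncomputable def openCompletion [Finite σ] (m : MergingMap T) (h0 : (m.f []).isSome)
    (g : (m.resulting h0).Q → σ → Option ((m.resulting h0).Q)) : Transducer σ γ :=
  { m.resulting h0 with
    δ := fun q a =>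
      match (m.resulting h0).δ q a with
      | some x => some x
      | none => (g q a).map fun q' => (q', ([] : List γ)) }

/-- The choice `g` of added transitions only adds transitions at open ends. -/
def ValidOpenChoice [Finite σ] (m : MergingMap T) (h0 : (m.f []).isSome)
    (g : (m.resulting h0).Q → σ → Option ((m.resulting h0).Q)) : Prop :=
  ∀ (q : (m.resulting h0).Q) (a : σ), (g q a).isSome →
    ∃ u : List σ, q.1 = m.cls u ∧ m.OpenEnd u a

/-- The run of `x` in the open completion uses a muted or an open transition. -/
def usesMutedOrOpen [Finite σ] (m : MergingMap T) (h0 : (m.f []).isSome)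
    (g : (m.resulting h0).Q → σ → Option ((m.resulting h0).Q)) (x : List σ) : Prop :=
  ∃ (vp : List σ) (a : σ) (vs : List σ) (q : (m.resulting h0).Q) (w : List γ),
    x = vp ++ a :: vs ∧
    (m.openCompletion h0 g).runFrom (m.openCompletion h0 g).q0 vp = some (q, w) ∧
    ((∃ u, q.1 = m.cls u ∧ m.Muted u a) ∨ (m.resulting h0).δ q a = none)

end MergingMap

/-- The equivalence on `P_T` induced by a transducer: two words are related when
they reach the same state of `M` (or both fail to have a run). -/
def inducedRel {σ γ : Type} (M : Transducer σ γ) (T : ObsTable σ γ) (u v : List σ) : Prop :=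
  u ∈ T.PT ∧ v ∈ T.PT ∧
    (M.runFrom M.q0 u).map Prod.fst = (M.runFrom M.q0 v).map Prod.fst

/-- Helper for the induced partial output function: walk through the word,
appending the transition output only when the step leads into `P_Γ` for
some equivalent word. -/
noncomputable def goF {σ γ : Type} (M : Transducer σ γ) (T : ObsTable σ γ) :
    M.Q → List γ → List σ → Option (List γ)
  | _, acc, [] => some acc
  | q, acc, a :: rest =>
    (M.δ q a).bind fun x =>
      goF M T x.1
        (if ∃ v ∈ T.PT, (M.runFrom M.q0 v).map Prod.fst = some q ∧ v ++ [a] ∈ T.PGamma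
          then acc ++ x.2 else acc) rest

/-- The partial output function induced by a transducer on `P_T`. -/
noncomputable def inducedF {σ γ : Type} (M : Transducer σ γ) (T : ObsTable σ γ)
    (u : List σ) : Option (List γ) :=
  if u ∈ T.PT then goF M T M.q0 M.w0 u else none


section AuxProof

variable {σ γ : Type}

/-! ### Generic transducer run lemmas -/

lemma Transducer.runFrom_nil (M : Transducer σ γ) (q : M.Q) :
    M.runFrom q [] = some (q, []) := rfl

lemma Transducer.runFrom_append (M : Transducer σ γ) (q : M.Q) (u v : List σ) :
    M.runFrom q (u ++ v) =
      (M.runFrom q u).bind fun p => (M.runFrom p.1 v).map fun y => (y.1, p.2 ++ y.2) := by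
  induction u generalizing q with
  | nil => simp [Transducer.runFrom]
  | cons a u ih =>
    simp only [List.cons_append, Transducer.runFrom]
    cases hδ : M.δ q a with
    | none => rfl
    | some x =>
      simp only [Option.bind_some, List.append_eq, ih]
      cases M.runFrom x.1 u with
      | none => rfl
      | some p =>
        simp only [Option.map_some, Option.bind_some]
        cases M.runFrom p.1 v with
        | none => rfl
        | some y => simp [List.append_assoc]

lemma Transducer.runFrom_singleton (M : Transducer σ γ) (q : M.Q) (a : σ) :
    M.runFrom q [a] = (M.δ q a).map fun x => (x.1, x.2) := by
  simp only [Transducer.runFrom]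
  cases M.δ q a with
  | none => rfl
  | some x => simp [Transducer.runFrom]

/-! ### Observation table basics -/

lemma ObsTable.rows_subset_PT (T : ObsTable σ γ) {x : List σ} (hx : x ∈ T.rows) :
    x ∈ T.PT := ⟨x, hx, List.prefix_refl x⟩

lemma ObsTable.PT_prefix_closed (T : ObsTable σ γ) {u v : List σ} (hu : u ∈ T.PT)
    (hv : v <+: u) : v ∈ T.PT := by
  obtain ⟨x, hx, hux⟩ := hu
  exact ⟨x, hx, hv.trans hux⟩

lemma ObsTable.eps_mem_rows (T : ObsTable σ γ) : ([] : List σ) ∈ T.rows :=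
  ⟨[], Or.inl T.eps_mem_P, [], T.eps_mem_S, rfl⟩

lemma ObsTable.eps_mem_PT (T : ObsTable σ γ) : ([] : List σ) ∈ T.PT :=
  T.rows_subset_PT T.eps_mem_rows

/-! ### goF lemmas -/

/-- The step (q, a) is "active": there is a witness whose extension is in `P_Γ`. -/
def Act (M : Transducer σ γ) (T : ObsTable σ γ) (q : M.Q) (a : σ) : Prop :=
  ∃ v ∈ T.PT, (M.runFrom M.q0 v).map Prod.fst = some q ∧ v ++ [a] ∈ T.PGamma

lemma goF_nil (M : Transducer σ γ) (T : ObsTable σ γ) (q : M.Q) (acc : List γ) :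
    goF M T q acc [] = some acc := rfl

lemma goF_cons (M : Transducer σ γ) (T : ObsTable σ γ) (q : M.Q) (acc : List γ)
    (a : σ) (rest : List σ) :
    goF M T q acc (a :: rest) =
      (M.δ q a).bind fun x =>
        goF M T x.1 (if Act M T q a then acc ++ x.2 else acc) rest := by
  simp only [goF, Act]
  congr

lemma goF_isSome (M : Transducer σ γ) (T : ObsTable σ γ) (u : List σ) :
    ∀ (q : M.Q) (acc : List γ), (goF M T q acc u).isSome = (M.runFrom q u).isSome := by
  induction u with
  | nil => intro q acc; rfl
  | cons a rest ih =>
    intro q acc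
    rw [goF_cons]
    simp only [Transducer.runFrom]
    cases M.δ q a with
    | none => rfl
    | some x =>
      simp only [Option.bind_some, ih, Option.isSome_map]

lemma goF_append_singleton (M : Transducer σ γ) (T : ObsTable σ γ) (u : List σ) :
    ∀ (q : M.Q) (acc : List γ) (a : σ),
    goF M T q acc (u ++ [a]) =
      (M.runFrom q u).bind fun p =>
        (goF M T q acc u).bind fun w =>
          (M.δ p.1 a).map fun x => if Act M T p.1 a then w ++ x.2 else w := by
  induction u with
  | nil =>
    intro q acc a
    rw [List.nil_append, goF_cons]
    simp only [Transducer.runFrom_nil, Option.bind_some, goF_nil]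
    cases M.δ q a with
    | none => rfl
    | some x => by_cases h : Act M T q a <;> simp [h, goF_nil]
  | cons b rest ih =>
    intro q acc a
    rw [List.cons_append, goF_cons, goF_cons]
    simp only [Transducer.runFrom]
    cases M.δ q b with
    | none => rfl
    | some x =>
      simp only [Option.bind_some, ih]
      cases M.runFrom x.1 rest with
      | none => rfl
      | some p => simp


/-! ### runFrom prefix decomposition -/

lemma Transducer.runFrom_prefix (M : Transducer σ γ) {q : M.Q} {u t : List σ}
    {px : M.Q × List γ} (h : M.runFrom q (u ++ t) = some px) :
    ∃ p y, M.runFrom q u = some p ∧ M.runFrom p.1 t = some y ∧ px = (y.1, p.2 ++ y.2) := by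
  rw [Transducer.runFrom_append] at h
  cases hp : M.runFrom q u with
  | none => rw [hp] at h; simp at h
  | some p =>
    rw [hp] at h
    simp only [Option.bind_some] at h
    cases hy : M.runFrom p.1 t with
    | none => rw [hy] at h; simp at h
    | some y =>
      rw [hy] at h
      simp only [Option.bind_some, Option.map_some, Option.some_inj] at h
      exact ⟨p, y, rfl, hy, h.symm⟩

/-! ### inducedF lemmas -/

lemma inducedF_nil (M : Transducer σ γ) (T : ObsTable σ γ) :
    inducedF M T [] = some M.w0 := by
  simp [inducedF, T.eps_mem_PT, goF_nil]

lemma inducedF_isSome (M : Transducer σ γ) (T : ObsTable σ γ) {u : List σ}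
    (h : (inducedF M T u).isSome) : u ∈ T.PT ∧ (M.runFrom M.q0 u).isSome := by
  unfold inducedF at h
  by_cases hu : u ∈ T.PT
  · rw [if_pos hu] at h
    exact ⟨hu, (goF_isSome M T u M.q0 M.w0) ▸ h⟩
  · rw [if_neg hu] at h; simp at h

lemma inducedF_some_of (M : Transducer σ γ) (T : ObsTable σ γ) {u : List σ}
    (hu : u ∈ T.PT) (hr : (M.runFrom M.q0 u).isSome) : (inducedF M T u).isSome := by
  unfold inducedF
  rw [if_pos hu, goF_isSome]
  exact hr

lemma goF_acc (M : Transducer σ γ) (T : ObsTable σ γ) (u : List σ) :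
    ∀ (q : M.Q) (acc : List γ),
      goF M T q acc u = (goF M T q [] u).map (acc ++ ·) := by
  induction u with
  | nil => intro q acc; simp [goF_nil]
  | cons a rest ih =>
    intro q acc
    rw [goF_cons, goF_cons]
    cases M.δ q a with
    | none => rfl
    | some x =>
      simp only [Option.bind_some, Option.map_bind]
      by_cases h : Act M T q a
      · simp only [List.nil_append]
        rw [if_pos h, if_pos h, ih x.1 (acc ++ x.2), ih x.1 x.2, Option.map_map]
        congr 1
        funext z
        simp [List.append_assoc]
      · rw [if_neg h, if_neg h, ih x.1 acc]

lemma inducedF_w0_prefix (M : Transducer σ γ) (T : ObsTable σ γ) {u : List σ}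
    {w : List γ} (h : inducedF M T u = some w) : M.w0 <+: w := by
  unfold inducedF at h
  by_cases hu : u ∈ T.PT
  · rw [if_pos hu, goF_acc] at h
    cases hg : goF M T M.q0 [] u with
    | none => rw [hg] at h; simp at h
    | some s =>
      rw [hg] at h
      simp only [Option.map_some, Option.some_inj] at h
      exact ⟨s, h⟩
  · rw [if_neg hu] at h; simp at h

lemma f_step' (M : Transducer σ γ) (T : ObsTable σ γ) {u : List σ} {a : σ}
    {p : M.Q × List γ} {x : M.Q × List γ}
    (hPT : u ++ [a] ∈ T.PT) (hp : M.runFrom M.q0 u = some p) (hx : M.δ p.1 a = some x) :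
    ∃ w, inducedF M T u = some w ∧
      inducedF M T (u ++ [a]) = some (w ++ if Act M T p.1 a then x.2 else []) := by
  have hu : u ∈ T.PT := T.PT_prefix_closed hPT ⟨[a], rfl⟩
  have hg : (goF M T M.q0 M.w0 u).isSome := by
    rw [goF_isSome, hp]; rfl
  obtain ⟨w, hw⟩ := Option.isSome_iff_exists.mp hg
  refine ⟨w, ?_, ?_⟩
  · unfold inducedF; rw [if_pos hu]; exact hw
  · unfold inducedF
    rw [if_pos hPT, goF_append_singleton, hp, Option.bind_some, hw, Option.bind_some, hx]
    by_cases h : Act M T p.1 a <;> simp [h]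

lemma f_step (M : Transducer σ γ) (T : ObsTable σ γ) {u : List σ} {a : σ} {z : List γ}
    (h : inducedF M T (u ++ [a]) = some z) :
    ∃ p x w, M.runFrom M.q0 u = some p ∧ M.δ p.1 a = some x ∧
      inducedF M T u = some w ∧ z = w ++ (if Act M T p.1 a then x.2 else []) := by
  have hs : (inducedF M T (u ++ [a])).isSome := by rw [h]; rfl
  obtain ⟨hPT, hr⟩ := inducedF_isSome M T hs
  obtain ⟨px, hpx⟩ := Option.isSome_iff_exists.mp hr
  obtain ⟨p, y, hp, hy, _⟩ := M.runFrom_prefix hpx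
  have hy1 := hy
  rw [Transducer.runFrom_singleton] at hy1
  cases hx : M.δ p.1 a with
  | none => rw [hx] at hy1; simp at hy1
  | some x =>
    obtain ⟨w, hw, hz⟩ := f_step' M T hPT hp hx
    rw [h, Option.some_inj] at hz
    exact ⟨p, x, w, hp, hx, hw, hz⟩

lemma inducedF_full (M : Transducer σ γ) (T : ObsTable σ γ) (hM : T.Compatible M)
    {x : List σ} {w : List γ} (hx : x ∈ T.rows) (hw : T.val x = TVal.word w) :
    ∀ u, u <+: x → ∃ p, M.runFrom M.q0 u = some p ∧
      inducedF M T u = some (M.w0 ++ p.2) ∧ (M.w0 ++ p.2) <+: w := by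
  have hsem : M.sem x = some w := (hM x hx).1 w hw
  unfold Transducer.sem at hsem
  cases hpx : M.runFrom M.q0 x with
  | none => rw [hpx] at hsem; simp at hsem
  | some px =>
    rw [hpx] at hsem
    simp only [Option.bind_some] at hsem
    cases hwf : M.δF px.1 with
    | none => rw [hwf] at hsem; simp at hsem
    | some wf =>
      rw [hwf] at hsem
      simp only [Option.bind_some, Option.map_some, Option.some_inj] at hsem
      have hxPT : x ∈ T.PT := T.rows_subset_PT hx
      intro u
      induction u using List.reverseRecOn with
      | nil =>
        intro _
        refine ⟨(M.q0, []), rfl, by simpa using inducedF_nil M T, ?_⟩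
        rw [← hsem]
        exact ⟨px.2 ++ wf, by simp⟩
      | append_singleton u' a ih =>
        intro hu
        have hu' : u' <+: x := (List.prefix_append u' [a]).trans hu
        obtain ⟨t, ht⟩ := hu
        obtain ⟨p', hp', hf', _⟩ := ih hu'
        -- decompose the run of x through u' ++ [a]
        rw [← ht] at hpx
        obtain ⟨p, y, hp, hy, hpxeq⟩ := M.runFrom_prefix hpx
        obtain ⟨p'', y', hp'', hy', hpeq⟩ := M.runFrom_prefix hp
        have hpp : p' = p'' := by rw [hp''] at hp'; exact (Option.some_inj.mp hp').symm
        subst hpp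
        rw [Transducer.runFrom_singleton] at hy'
        cases hδ : M.δ p'.1 a with
        | none => rw [hδ] at hy'; simp at hy'
        | some xx =>
          rw [hδ] at hy'
          simp only [Option.map_some, Option.some_inj] at hy'
          have hPTa : u' ++ [a] ∈ T.PT := T.PT_prefix_closed hxPT ⟨t, ht⟩
          have hAct : Act M T p'.1 a := by
            refine ⟨u', T.PT_prefix_closed hxPT hu', by rw [hp'']; rfl, ?_⟩
            exact ⟨hPTa, t, by rw [ht]; exact hx, w, by rw [ht]; exact hw⟩
          obtain ⟨w', hw', hfa⟩ := f_step' M T hPTa hp'' hδ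
          rw [hf', Option.some_inj] at hw'
          subst hw'
          rw [if_pos hAct] at hfa
          refine ⟨p, hp, by rw [hfa, hpeq, ← hy']; simp, ?_⟩
          rw [← hsem, hpxeq, hpeq, ← hy']
          refine ⟨y.2 ++ wf, ?_⟩
          simp [List.append_assoc]


/-! ### helpers about runs and the induced relation -/

lemma map_fst_some {α β : Type} {o : Option (α × β)} {q : α}
    (h : o.map Prod.fst = some q) : ∃ p, o = some p ∧ p.1 = q := by
  cases o with
  | none => simp at h
  | some p => exact ⟨p, rfl, by simpa using h⟩

lemma run_snoc_fst (M : Transducer σ γ) {u : List σ} {p : M.Q × List γ}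
    (hp : M.runFrom M.q0 u = some p) (a : σ) :
    (M.runFrom M.q0 (u ++ [a])).map Prod.fst = (M.δ p.1 a).map Prod.fst := by
  rw [Transducer.runFrom_append, hp, Option.bind_some, Transducer.runFrom_singleton]
  cases M.δ p.1 a <;> simp

lemma inducedRel_run_eq (M : Transducer σ γ) (T : ObsTable σ γ) {u v : List σ}
    {p : M.Q × List γ} (h : inducedRel M T u v) (hp : M.runFrom M.q0 u = some p) :
    ∃ p', M.runFrom M.q0 v = some p' ∧ p'.1 = p.1 := by
  obtain ⟨_, _, heq⟩ := h
  rw [hp] at heq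
  obtain ⟨p', hp', h1⟩ := map_fst_some heq.symm
  exact ⟨p', hp', h1⟩

/-! ### The induced merging map -/

noncomputable def inducedMM (M : Transducer σ γ) (T : ObsTable σ γ)
    (hM : T.Compatible M) : MergingMap T where
  rel := inducedRel M T
  f := inducedF M T
  rel_mem := fun u v h => ⟨h.1, h.2.1⟩
  rel_refl := fun u hu => ⟨hu, hu, rfl⟩
  rel_symm := fun h => ⟨h.2.1, h.1, h.2.2.symm⟩
  rel_trans := fun h1 h2 => ⟨h1.1, h2.2.1, h1.2.2.trans h2.2.2⟩
  f_mem := fun u h => (inducedF_isSome M T h).1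
  cond1 := by
    intro u v h0 hrel
    by_contra hv
    have hvs : (inducedF M T v).isSome := Option.ne_none_iff_isSome.mp hv
    obtain ⟨hvPT, hvr⟩ := inducedF_isSome M T hvs
    have hur : (M.runFrom M.q0 u).isSome := by
      have heq := hrel.2.2
      cases hrv : M.runFrom M.q0 v with
      | none => rw [hrv] at hvr; simp at hvr
      | some pv =>
        rw [hrv] at heq
        obtain ⟨p, hp, -⟩ := map_fst_some heq
        rw [hp]; rfl
    have := inducedF_some_of M T hrel.1 hur
    rw [h0] at this
    simp at this
  cond2 := by
    intro u v w huPT hrow hval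
    obtain ⟨p, _, hf, hpre⟩ := inducedF_full M T hM hrow hval u ⟨v, rfl⟩
    exact ⟨M.w0 ++ p.2, hf, hpre⟩
  cond3 := by
    intro u a w h
    obtain ⟨p, x, w', hp, hx, hw', hz⟩ := f_step M T h
    exact ⟨w', hw', by rw [hz]; exact ⟨_, rfl⟩⟩
  cond4 := by
    intro u u' a wu hfu hrel hua hu'a
    have hus : (inducedF M T u).isSome := by rw [hfu]; rfl
    obtain ⟨huPT, hur⟩ := inducedF_isSome M T hus
    obtain ⟨p, hp⟩ := Option.isSome_iff_exists.mp hur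
    obtain ⟨p', hp', hpp⟩ := inducedRel_run_eq M T hrel hp
    constructor
    · refine ⟨hua, hu'a, ?_⟩
      rw [run_snoc_fst M hp a, run_snoc_fst M hp' a, hpp]
    · intro wua hfua
      obtain ⟨p2, x, w2, hp2, hx2, hw2, hz2⟩ := f_step M T hfua
      rw [hp] at hp2
      have hp2' : p = p2 := Option.some_inj.mp hp2
      subst hp2'
      rw [hfu] at hw2
      have : wu = w2 := Option.some_inj.mp hw2
      subst this
      have hδ' : M.δ p'.1 a = some x := by rw [hpp]; exact hx2
      obtain ⟨wu', hwu', hfua'⟩ := f_step' M T hu'a hp' hδ'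
      refine ⟨wu', if Act M T p.1 a then x.2 else [], hwu', hz2, ?_⟩
      rw [hfua', hpp]
  cond5 := by
    intro u u' w hurows hval hrel
    have hsemu : M.sem u = some w := (hM u hurows).1 w hval
    unfold Transducer.sem at hsemu
    cases hpu : M.runFrom M.q0 u with
    | none => rw [hpu] at hsemu; simp at hsemu
    | some pu =>
      rw [hpu] at hsemu
      simp only [Option.bind_some] at hsemu
      cases hwfu : M.δF pu.1 with
      | none => rw [hwfu] at hsemu; simp at hsemu
      | some wfu =>
        rw [hwfu] at hsemu
        simp only [Option.map_some, Option.some_inj] at hsemu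
        obtain ⟨pu', hpu', hpp⟩ := inducedRel_run_eq M T hrel hpu
        have hsemu' : M.sem u' = some (M.w0 ++ pu'.2 ++ wfu) := by
          unfold Transducer.sem
          rw [hpu', Option.bind_some, hpp, hwfu]
          rfl
        constructor
        · intro hr hb
          have := (hM u' hr).2 hb
          rw [this] at hsemu'
          simp at hsemu'
        · intro w' hr hval'
          have hw' : w' = M.w0 ++ pu'.2 ++ wfu := by
            have := (hM u' hr).1 w' hval'
            rw [this] at hsemu'
            exact Option.some_inj.mp hsemu'
          obtain ⟨q1, hq1, hf1, _⟩ := inducedF_full M T hM hurows hval u (List.prefix_refl u)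
          obtain ⟨q2, hq2, hf2, _⟩ :=
            inducedF_full M T hM hr hval' u' (List.prefix_refl u')
          rw [hpu] at hq1
          rw [hpu'] at hq2
          have e1 : pu = q1 := Option.some_inj.mp hq1
          have e2 : pu' = q2 := Option.some_inj.mp hq2
          subst e1; subst e2
          exact ⟨wfu, M.w0 ++ pu.2, M.w0 ++ pu'.2, hf1, hf2,
            by rw [← hsemu, List.append_assoc], by rw [hw', List.append_assoc]⟩
  cond6 := by
    intro u a hsome hnm
    obtain ⟨z, hz⟩ := Option.isSome_iff_exists.mp hsome
    obtain ⟨p, x, w, hp, hx, hw, hzw⟩ := f_step M T hz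
    have hnact : ¬ Act M T p.1 a := by
      rintro ⟨v, hvPT, hvfst, hvaPG⟩
      have huaPT : u ++ [a] ∈ T.PT := (inducedF_isSome M T hsome).1
      have huPT : u ∈ T.PT := T.PT_prefix_closed huaPT ⟨[a], rfl⟩
      exact hnm ⟨v, ⟨huPT, hvPT, by rw [hp, hvfst]; simp⟩, hvaPG⟩
    rw [hz, hw, hzw, if_neg hnact, List.append_nil]

lemma inducedMM_f (M : Transducer σ γ) (T : ObsTable σ γ) (hM : T.Compatible M) :
    (inducedMM M T hM).f = inducedF M T := rfl

lemma inducedMM_h0 (M : Transducer σ γ) (T : ObsTable σ γ) (hM : T.Compatible M) :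
    ((inducedMM M T hM).f []).isSome = true := by
  rw [inducedMM_f, inducedF_nil]; rfl


/-! ### Generic merging map class lemmas -/

lemma MergingMap.cls_eq_of_rel {T : ObsTable σ γ} (m : MergingMap T) {u v : List σ}
    (h : m.rel u v) : m.cls u = m.cls v :=
  Set.ext fun w => ⟨fun hw => m.rel_trans (m.rel_symm h) hw, fun hw => m.rel_trans h hw⟩

lemma MergingMap.rel_of_cls_eq {T : ObsTable σ γ} (m : MergingMap T) {u v : List σ}
    (hv : v ∈ T.PT) (h : m.cls u = m.cls v) : m.rel u v := by
  have : v ∈ m.cls v := m.rel_refl v hv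
  rw [← h] at this
  exact this

/-! ### Computing the resulting transducer of the induced merging map -/

section Resulting

variable [Finite σ] {M : Transducer σ γ} {T : ObsTable σ γ} (m : MergingMap T)
  (hmf : m.f = inducedF M T) (hmrel : m.rel = inducedRel M T) (h0 : (m.f []).isSome)

include hmf hmrel

lemma res_delta_some {u : List σ} {a : σ} {p x : M.Q × List γ}
    (hu : (m.f u).isSome) (hua : (m.f (u ++ [a])).isSome)
    (hp : M.runFrom M.q0 u = some p) (hx : M.δ p.1 a = some x)
    (hclu : m.cls u ∈ m.classes) :
    (m.resulting h0).δ ⟨m.cls u, hclu⟩ a =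
      some (⟨m.cls (u ++ [a]), m.cls_mem_classes hua⟩,
        if Act M T p.1 a then x.2 else []) := by
  have hcond : ∃ v, (m.f v).isSome ∧ (m.f (v ++ [a])).isSome ∧
      (⟨m.cls u, hclu⟩ : {C // C ∈ m.classes}).1 = m.cls v := ⟨u, hu, hua, rfl⟩
  simp only [MergingMap.resulting]
  rw [dif_pos hcond]
  obtain ⟨hv1, hv2, hv3⟩ := hcond.choose_spec
  set v := hcond.choose with hvdef
  have hrelv : m.rel u v := m.rel_of_cls_eq (m.f_mem v hv1) hv3
  rw [hmrel] at hrelv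
  obtain ⟨pv, hpv, hpvp⟩ := inducedRel_run_eq M T hrelv hp
  obtain ⟨zv, hzv⟩ := Option.isSome_iff_exists.mp hv2
  have hzv' : inducedF M T (v ++ [a]) = some zv := by rw [← hmf]; exact hzv
  obtain ⟨pv2, xv, wv, hpv2, hxv, hwv, hzdec⟩ := f_step M T hzv'
  rw [hpv] at hpv2
  have epv : pv = pv2 := Option.some_inj.mp hpv2
  subst epv
  rw [hpvp, hx] at hxv
  have exv : x = xv := Option.some_inj.mp hxv
  subst exv
  have hgetva : (m.f (v ++ [a])).get hv2 = zv := by simp [hzv]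
  have hgetv : (m.f v).get hv1 = wv := by simp [hmf, hwv]
  have hcls : m.cls (v ++ [a]) = m.cls (u ++ [a]) := by
    apply m.cls_eq_of_rel
    rw [hmrel]
    refine ⟨(inducedF_isSome M T (hmf ▸ hv2)).1, (inducedF_isSome M T (hmf ▸ hua)).1, ?_⟩
    rw [run_snoc_fst M hpv a, run_snoc_fst M hp a, hpvp]
  refine congrArg some (Prod.ext ?_ ?_)
  · exact Subtype.ext hcls
  · change List.drop ((m.f v).get hv1).length ((m.f (v ++ [a])).get hv2) = _
    simp only [hgetva, hgetv, hzdec, hpvp, List.drop_left]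

lemma res_delta_none {u : List σ} {a : σ} {p : M.Q × List γ}
    (hu : (m.f u).isSome) (hp : M.runFrom M.q0 u = some p) (hδ : M.δ p.1 a = none)
    (hclu : m.cls u ∈ m.classes) :
    (m.resulting h0).δ ⟨m.cls u, hclu⟩ a = none := by
  simp only [MergingMap.resulting]
  rw [dif_neg]
  rintro ⟨v, hv1, hv2, hv3⟩
  have hrelv : m.rel u v := m.rel_of_cls_eq (m.f_mem v hv1) hv3
  rw [hmrel] at hrelv
  obtain ⟨pv, hpv, hpvp⟩ := inducedRel_run_eq M T hrelv hp
  obtain ⟨zv, hzv⟩ := Option.isSome_iff_exists.mp hv2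
  have hzv' : inducedF M T (v ++ [a]) = some zv := by rw [← hmf]; exact hzv
  obtain ⟨pv2, xv, wv, hpv2, hxv, hwv, hzdec⟩ := f_step M T hzv'
  rw [hpv] at hpv2
  have epv : pv = pv2 := Option.some_inj.mp hpv2
  subst epv
  rw [hpvp, hδ] at hxv
  simp at hxv

lemma res_run : ∀ x, x ∈ T.PT →
    (m.f x = none → (m.resulting h0).runFrom (m.resulting h0).q0 x = none) ∧
    (∀ z, m.f x = some z → ∀ hcl : m.cls x ∈ m.classes,
      (m.resulting h0).runFrom (m.resulting h0).q0 x =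
        some (⟨m.cls x, hcl⟩, z.drop M.w0.length)) := by
  intro x
  induction x using List.reverseRecOn with
  | nil =>
    intro _
    constructor
    · intro hnone
      rw [hmf, inducedF_nil] at hnone
      simp at hnone
    · intro z hz hcl
      have hz' : z = M.w0 := by
        rw [hmf, inducedF_nil] at hz
        exact (Option.some_inj.mp hz).symm
      subst hz'
      rw [List.drop_length]
      rfl
  | append_singleton u a ih =>
    intro hxPT
    have huPT : u ∈ T.PT := T.PT_prefix_closed hxPT ⟨[a], rfl⟩
    obtain ⟨ihn, ihs⟩ := ih huPT
    constructor
    · intro hnone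
      cases hfu : m.f u with
      | none =>
        rw [Transducer.runFrom_append, ihn hfu]
        rfl
      | some wu =>
        have hus : (inducedF M T u).isSome := by rw [← hmf, hfu]; rfl
        obtain ⟨p, hp⟩ := Option.isSome_iff_exists.mp (inducedF_isSome M T hus).2
        have hδ : M.δ p.1 a = none := by
          cases hδ : M.δ p.1 a with
          | none => rfl
          | some x =>
            obtain ⟨w, hw, hfa⟩ := f_step' M T hxPT hp hδ
            rw [← hmf] at hfa
            rw [hnone] at hfa
            simp at hfa
        have hfus : (m.f u).isSome := by rw [hfu]; rfl
        have hrun := ihs wu hfu (m.cls_mem_classes hfus)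
        rw [Transducer.runFrom_append, hrun, Option.bind_some,
          Transducer.runFrom_singleton,
          res_delta_none m hmf hmrel h0 hfus hp hδ (m.cls_mem_classes hfus)]
        rfl
    · intro z hz hcl
      have hz' : inducedF M T (u ++ [a]) = some z := by rw [← hmf]; exact hz
      obtain ⟨p, x, w, hp, hx, hw, hzdec⟩ := f_step M T hz'
      have hfu : m.f u = some w := by rw [hmf]; exact hw
      have hfus : (m.f u).isSome := by rw [hfu]; rfl
      have hfuas : (m.f (u ++ [a])).isSome := by rw [hz]; rfl
      have hrun := ihs w hfu (m.cls_mem_classes hfus)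
      rw [Transducer.runFrom_append, hrun, Option.bind_some,
        Transducer.runFrom_singleton,
        res_delta_some m hmf hmrel h0 hfus hfuas hp hx (m.cls_mem_classes hfus)]
      have hw0 : M.w0 <+: w := inducedF_w0_prefix M T hw
      have hdrop : z.drop M.w0.length =
          w.drop M.w0.length ++ (if Act M T p.1 a then x.2 else []) := by
        rw [hzdec, List.drop_append_of_le_length hw0.length_le]
      rw [hdrop]
      rfl

end Resulting


lemma sem_decomp (M : Transducer σ γ) {x : List σ} {w : List γ} (h : M.sem x = some w) :
    ∃ p wf, M.runFrom M.q0 x = some p ∧ M.δF p.1 = some wf ∧ w = M.w0 ++ p.2 ++ wf := by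
  unfold Transducer.sem at h
  cases hp : M.runFrom M.q0 x with
  | none => rw [hp] at h; simp at h
  | some p =>
    rw [hp] at h
    simp only [Option.bind_some] at h
    cases hwf : M.δF p.1 with
    | none => rw [hwf] at h; simp at h
    | some wf =>
      rw [hwf] at h
      simp only [Option.map_some, Option.some_inj] at h
      exact ⟨p, wf, rfl, hwf, h.symm⟩

section ResultingF

variable [Finite σ] {M : Transducer σ γ} {T : ObsTable σ γ} (m : MergingMap T)
  (hmf : m.f = inducedF M T) (hmrel : m.rel = inducedRel M T) (h0 : (m.f []).isSome)
  (hM : T.Compatible M)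

include hmf hmrel hM

lemma res_deltaF_word {x : List σ} {z w : List γ}
    (hz : m.f x = some z) (hxr : x ∈ T.rows) (hw : T.val x = TVal.word w)
    (hcl : m.cls x ∈ m.classes) :
    ∃ wf, (m.resulting h0).δF ⟨m.cls x, hcl⟩ = some wf ∧ z ++ wf = w := by
  have hcond : ∃ u, (m.f u).isSome ∧
      (⟨m.cls x, hcl⟩ : {C // C ∈ m.classes}).1 = m.cls u ∧ u ∈ T.rows ∧
      ∃ w', T.val u = TVal.word w' := ⟨x, by rw [hz]; rfl, rfl, hxr, ⟨w, hw⟩⟩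
  simp only [MergingMap.resulting]
  rw [dif_pos hcond]
  obtain ⟨hu1, hu2, hu3, hex⟩ := hcond.choose_spec
  have hwc : T.val hcond.choose = TVal.word hcond.choose_spec.2.2.2.choose :=
    hcond.choose_spec.2.2.2.choose_spec
  set u := hcond.choose with hudef
  set wc := hcond.choose_spec.2.2.2.choose with hwcdef
  -- data for u
  obtain ⟨pc, hpc, hfc, _⟩ := inducedF_full M T hM hu3 hwc u (List.prefix_refl u)
  obtain ⟨pc', wfc, hpc', hwfc, hwceq⟩ := sem_decomp M ((hM u hu3).1 wc hwc)
  rw [hpc] at hpc'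
  have epc : pc = pc' := Option.some_inj.mp hpc'
  subst epc
  -- data for x
  obtain ⟨p, hp, hfx, _⟩ := inducedF_full M T hM hxr hw x (List.prefix_refl x)
  obtain ⟨p', wfx, hp', hwfx, hweq⟩ := sem_decomp M ((hM x hxr).1 w hw)
  rw [hp] at hp'
  have ep : p = p' := Option.some_inj.mp hp'
  subst ep
  -- x and u reach the same state
  have hrelxu : m.rel x u := m.rel_of_cls_eq (m.f_mem u hu1) hu2
  rw [hmrel] at hrelxu
  obtain ⟨pc2, hpc2, hpc2p⟩ := inducedRel_run_eq M T hrelxu hp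
  rw [hpc] at hpc2
  have epc2 : pc = pc2 := Option.some_inj.mp hpc2
  subst epc2
  have hwfeq : wfx = wfc := by
    rw [hpc2p, hwfx] at hwfc
    exact Option.some_inj.mp hwfc
  -- compute the value
  have hgetu : (m.f u).get hu1 = M.w0 ++ pc.2 := by simp [hmf, hfc]
  have hzval : z = M.w0 ++ p.2 := by
    rw [hmf, hfx] at hz
    exact (Option.some_inj.mp hz).symm
  refine ⟨_, rfl, ?_⟩
  rw [hgetu, hwceq, List.drop_left, hzval, hweq, hwfeq]

lemma res_deltaF_bot {x : List σ}
    (hz : (m.f x).isSome) (hxr : x ∈ T.rows) (hb : T.val x = TVal.bot)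
    (hcl : m.cls x ∈ m.classes) :
    (m.resulting h0).δF ⟨m.cls x, hcl⟩ = none := by
  simp only [MergingMap.resulting]
  rw [dif_neg]
  rintro ⟨u, hu1, hu2, hu3, wu, hwu⟩
  obtain ⟨p, hp⟩ := Option.isSome_iff_exists.mp (inducedF_isSome M T (hmf ▸ hz)).2
  have hrelxu : m.rel x u := m.rel_of_cls_eq (m.f_mem u hu1) hu2
  rw [hmrel] at hrelxu
  obtain ⟨pu, hpu, hpup⟩ := inducedRel_run_eq M T hrelxu hp
  obtain ⟨pu', wfu, hpu', hwfu, _⟩ := sem_decomp M ((hM u hu3).1 wu hwu)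
  rw [hpu] at hpu'
  have epu : pu = pu' := Option.some_inj.mp hpu'
  subst epu
  have hsemx : M.sem x = none := (hM x hxr).2 hb
  unfold Transducer.sem at hsemx
  rw [hp, Option.bind_some, ← hpup, hwfu] at hsemx
  simp at hsemx

lemma res_w0 : (m.resulting h0).w0 = M.w0 := by
  have h : m.f [] = some M.w0 := by rw [hmf]; exact inducedF_nil M T
  simp only [MergingMap.resulting]
  simp [h]

end ResultingF

end AuxProof

/-- For every transducer `M` compatible with `T` there is a
transducer with at most as many states, compatible with `T`, that results from
some merging map on `T`. -/
theorem exists_resulting_compatible_le {σ γ : Type} [Finite σ] [Finite γ]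
    (T : ObsTable σ γ) (M : Transducer σ γ) (hM : T.Compatible M) :
    ∃ (m : MergingMap T) (h0 : (m.f []).isSome = true),
      T.Compatible (m.resulting h0) ∧ (m.resulting h0).size ≤ M.size := by
  classical
  refine ⟨inducedMM M T hM, inducedMM_h0 M T hM, ?_, ?_⟩
  · -- compatibility of the resulting transducer
    set m := inducedMM M T hM with hmdef
    have hmf : m.f = inducedF M T := rfl
    have hmrel : m.rel = inducedRel M T := rfl
    set h0 := inducedMM_h0 M T hM with h0def
    intro x hx
    have hxPT : x ∈ T.PT := T.rows_subset_PT hx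
    constructor
    · intro w hw
      obtain ⟨p, hpr, hf, _⟩ := inducedF_full M T hM hx hw x (List.prefix_refl x)
      have hz : m.f x = some (M.w0 ++ p.2) := by rw [hmf]; exact hf
      have hcl : m.cls x ∈ m.classes := m.cls_mem_classes (by rw [hz]; rfl)
      have hrun := (res_run m hmf hmrel h0 x hxPT).2 _ hz hcl
      obtain ⟨wf, hdf, hzw⟩ := res_deltaF_word m hmf hmrel h0 hM hz hx hw hcl
      unfold Transducer.sem
      rw [hrun, Option.bind_some, hdf]
      simp only [Option.map_some, Option.some_inj]
      rw [res_w0 m hmf hmrel h0 hM, List.drop_left]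
      exact hzw
    · intro hb
      cases hfx : m.f x with
      | none =>
        have hrun := (res_run m hmf hmrel h0 x hxPT).1 hfx
        unfold Transducer.sem
        rw [hrun]
        rfl
      | some z =>
        have hcl : m.cls x ∈ m.classes := m.cls_mem_classes (by rw [hfx]; rfl)
        have hrun := (res_run m hmf hmrel h0 x hxPT).2 z hfx hcl
        have hdf := res_deltaF_bot m hmf hmrel h0 hM (by rw [hfx]; rfl) hx hb hcl
        unfold Transducer.sem
        rw [hrun, Option.bind_some, hdf]
        rfl
  · -- size bound
    set m := inducedMM M T hM with hmdef
    have hmf : m.f = inducedF M T := rfl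
    have hmrel : m.rel = inducedRel M T := rfl
    have hfin : Finite M.Q := M.fin
    have key : ∀ C : {C : Set (List σ) // C ∈ m.classes}, ∃ q : M.Q, ∃ u : List σ,
        (m.f u).isSome ∧ C.1 = m.cls u ∧ (M.runFrom M.q0 u).map Prod.fst = some q := by
      intro C
      obtain ⟨u, hu, hC⟩ := C.2
      obtain ⟨p, hp⟩ := Option.isSome_iff_exists.mp (inducedF_isSome M T (hmf ▸ hu)).2
      exact ⟨p.1, u, hu, hC, by rw [hp]; rfl⟩
    choose ψ uOf hu1 hu2 hu3 using key
    have hinj : Function.Injective ψ := by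
      intro C1 C2 hψ
      apply Subtype.ext
      rw [hu2 C1, hu2 C2]
      apply m.cls_eq_of_rel
      rw [hmrel]
      refine ⟨m.f_mem _ (hu1 C1), m.f_mem _ (hu1 C2), ?_⟩
      rw [hu3 C1, hu3 C2, hψ]
    exact Nat.card_le_card_of_injective ψ hinj
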